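/- Let G be a group and let S be a submonoid of G that generates G as a group. If (F_i)_{i∈I} is a right Følner net of S, then (F_i)_{i∈I}, viewed as a net of finite subsets of G, is a right Følner net of G; that is, for every g ∈ G the ratio |F_i·g Δ F_i|/|F_i| tends to 0 along I. -/

import Mathlib

open Filter

private lemma aux_img_mul {G : Type*} [Group G] [DecidableEq G] (A : Finset G) (g h : G) :
    (A.image (· * g)).image (· * h) = A.image (· * (g * h)) := by
  rw [Finset.image_image]
  congr 1
  ext x
  simp [mul_assoc]

private lemma aux_card_symm {G : Type*} [Group G] [DecidableEq G] (A : Finset G) (g : G) :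
    (symmDiff (A.image (· * g)) A).card = 2 * ((A.image (· * g)) \ A).card := by
  rw [symmDiff_def, Finset.sup_eq_union, Finset.card_union_of_disjoint disjoint_sdiff_sdiff]
  have h1 : (A \ A.image (· * g)).card = (A.image (· * g) \ A).card := by
    apply Finset.card_sdiff_comm
    rw [Finset.card_image_of_injective _ (mul_left_injective g)]
  omega

/-- a right Følner net of a submonoid `S` generating the group `G`,
viewed inside `G`, is a right Følner net of `G` (symmetric-difference form). -/
theorem stmt5 {G : Type*} [Group G] [DecidableEq G] (S : Submonoid G)
    (hgen : Subgroup.closure (S : Set G) = ⊤)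
    {I : Type*} [Preorder I] [Nonempty I] [IsDirected I (· ≤ ·)]
    (F : I → Finset ↥S) (hne : ∀ i, (F i).Nonempty)
    (hF : ∀ s : ↥S,
      Tendsto (fun i => ((((F i).image (· * s)) \ F i).card : ℝ) / ((F i).card : ℝ))
        atTop (nhds 0)) :
    ∀ g : G,
      Tendsto (fun i =>
          ((symmDiff (((F i).image (fun x : ↥S => (x : G))).image (· * g))
              ((F i).image (fun x : ↥S => (x : G)))).card : ℝ) /
            ((((F i).image (fun x : ↥S => (x : G)))).card : ℝ))
        atTop (nhds 0) := by
  set A : I → Finset G := fun i => (F i).image (fun x : ↥S => (x : G)) with hA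
  have hAcard : ∀ i, (A i).card = (F i).card := fun i =>
    Finset.card_image_of_injective _ Subtype.val_injective
  have hApos : ∀ i, (0 : ℝ) < ((A i).card : ℝ) := fun i => by
    exact_mod_cast Finset.card_pos.2 ((hne i).image _)
  set f : G → I → ℝ := fun g i =>
    ((symmDiff ((A i).image (· * g)) (A i)).card : ℝ) / ((A i).card : ℝ) with hf
  suffices h : ∀ g : G, Tendsto (f g) atTop (nhds 0) by
    intro g; exact h g
  have hnum_mul : ∀ (g h : G) (i : I),
      ((symmDiff ((A i).image (· * (g * h))) ((A i).image (· * h))).card : ℝ)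
        = ((symmDiff ((A i).image (· * g)) (A i)).card : ℝ) := by
    intro g h i
    have : symmDiff ((A i).image (· * (g * h))) ((A i).image (· * h))
        = (symmDiff ((A i).image (· * g)) (A i)).image (· * h) := by
      rw [Finset.image_symmDiff _ _ (mul_left_injective h), aux_img_mul]
    rw [this, Finset.card_image_of_injective _ (mul_left_injective h)]
  have hSmem : ∀ s : ↥S, Tendsto (f (s : G)) atTop (nhds 0) := by
    intro s
    have h2 := (hF s).const_mul (2 : ℝ)
    rw [mul_zero] at h2
    have heq : f (s : G) = fun i =>
        2 * (((((F i).image (· * s)) \ F i).card : ℝ) / ((F i).card : ℝ)) := by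
      funext i
      show ((symmDiff ((A i).image (· * (s : G))) (A i)).card : ℝ) / ((A i).card : ℝ) = _
      have himg : (A i).image (· * (s : G))
          = ((F i).image (· * s)).image (fun x : ↥S => (x : G)) := by
        rw [hA, Finset.image_image, Finset.image_image]
        congr 1
      have hsd : (((F i).image (· * s)).image (fun x : ↥S => (x : G))) \ (A i)
          = (((F i).image (· * s)) \ F i).image (fun x : ↥S => (x : G)) := by
        rw [hA, Finset.image_sdiff _ _ Subtype.val_injective]
      have hcs : (symmDiff ((A i).image (· * (s : G))) (A i)).card
          = 2 * ((((F i).image (· * s)) \ F i).card) := by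
        rw [aux_card_symm, himg, hsd,
          Finset.card_image_of_injective _ Subtype.val_injective]
      rw [hcs, hAcard]
      push_cast
      ring
    rw [heq]
    exact h2
  have hone : Tendsto (f 1) atTop (nhds 0) := by
    have : f 1 = fun _ => (0 : ℝ) := by
      funext i
      show ((symmDiff ((A i).image (· * 1)) (A i)).card : ℝ) / ((A i).card : ℝ) = 0
      simp [mul_one]
    rw [this]; exact tendsto_const_nhds
  have hinv : ∀ g : G, Tendsto (f g) atTop (nhds 0) → Tendsto (f g⁻¹) atTop (nhds 0) := by
    intro g hg
    have heq : f g⁻¹ = f g := by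
      funext i
      show ((symmDiff ((A i).image (· * g⁻¹)) (A i)).card : ℝ) / ((A i).card : ℝ)
          = ((symmDiff ((A i).image (· * g)) (A i)).card : ℝ) / ((A i).card : ℝ)
      have hnum : (symmDiff ((A i).image (· * g⁻¹)) (A i)).card
          = (symmDiff ((A i).image (· * g)) (A i)).card := by
        rw [← Finset.card_image_of_injective (symmDiff ((A i).image (· * g⁻¹)) (A i))
          (mul_left_injective g), Finset.image_symmDiff _ _ (mul_left_injective g), aux_img_mul]
        simp [symmDiff_comm]
      rw [hnum]
    rw [heq]; exact hg
  have hmul : ∀ g h : G, Tendsto (f g) atTop (nhds 0) → Tendsto (f h) atTop (nhds 0) →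
      Tendsto (f (g * h)) atTop (nhds 0) := by
    intro g h hg hh
    have hsum := hg.add hh
    rw [add_zero] at hsum
    apply squeeze_zero (fun i => div_nonneg (by positivity) (le_of_lt (hApos i))) _ hsum
    intro i
    show ((symmDiff ((A i).image (· * (g * h))) (A i)).card : ℝ) / ((A i).card : ℝ)
        ≤ f g i + f h i
    have hsub : symmDiff ((A i).image (· * (g * h))) (A i)
        ⊆ (symmDiff ((A i).image (· * (g * h))) ((A i).image (· * h)))
          ∪ (symmDiff ((A i).image (· * h)) (A i)) := symmDiff_triangle _ _ _
    have hcard : ((symmDiff ((A i).image (· * (g * h))) (A i)).card : ℝ)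
        ≤ ((symmDiff ((A i).image (· * g)) (A i)).card : ℝ)
          + ((symmDiff ((A i).image (· * h)) (A i)).card : ℝ) := by
      rw [← hnum_mul g h i]
      calc ((symmDiff ((A i).image (· * (g * h))) (A i)).card : ℝ)
          ≤ (((symmDiff ((A i).image (· * (g * h))) ((A i).image (· * h)))
              ∪ (symmDiff ((A i).image (· * h)) (A i))).card : ℝ) := by
            exact_mod_cast Finset.card_le_card hsub
        _ ≤ _ := by exact_mod_cast Finset.card_union_le _ _
    show _ ≤ ((symmDiff ((A i).image (· * g)) (A i)).card : ℝ) / ((A i).card : ℝ)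
        + ((symmDiff ((A i).image (· * h)) (A i)).card : ℝ) / ((A i).card : ℝ)
    rw [← add_div]
    exact (div_le_div_iff_of_pos_right (hApos i)).2 hcard
  set H : Subgroup G :=
    { carrier := {g : G | Tendsto (f g) atTop (nhds 0)}
      one_mem' := hone
      mul_mem' := fun {a b} ha hb => hmul a b ha hb
      inv_mem' := fun {a} ha => hinv a ha } with hH
  have hSsub : (S : Set G) ⊆ H := by
    rintro x hx
    exact hSmem ⟨x, hx⟩
  have : Subgroup.closure (S : Set G) ≤ H := (Subgroup.closure_le H).2 hSsub
  rw [hgen] at this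
  intro g
  exact this (Subgroup.mem_top g)
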